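/- Consider the nearest-neighbour chain on ℕ with rates q(x,x+1)=(2x+1)/(4x) and q(x,x-1)=(2x-1)/(4x) for x≥1, and its 2-leg spider with span s=2 where the first leg is always the left leg, so that L(x)={(x,x+1),(x,x+2)}. Identifying the configuration (x,x+i) with the integer 2x+i−1, the jump chain of the spider walk is a nearest-neighbour chain on the integers whose mean drift satisfies μ^s(2x)=(2x+1)/(4x(x+1)−1) and μ^s(2x+1)=(x+1)/(2x(x+2)+1) for x≥1; in particular μ^s(n)∼1/n as n→∞ and the spider walk is transient. -/

import Mathlib

open scoped ENNReal

/- STATEMENT 9: For the nearest-neighbour chain on ℕ with rates q(x,x+1)=(2x+1)/(4x),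
q(x,x-1)=(2x-1)/(4x) for x ≥ 1, the 2-leg spider with span s=2 (ordered legs,
L(x)={(x,x+1),(x,x+2)}), identified with a chain on ℕ via (x,x+i) ↔ 2x+i-1, has a
nearest-neighbour jump chain whose mean drift satisfies
μ^s(2x)=(2x+1)/(4x(x+1)-1) and μ^s(2x+1)=(x+1)/(2x(x+2)+1) for x ≥ 1; in particular
μ^s(n) ∼ 1/n and the spider walk is transient. -/

/-- Configurations of the 2-leg spider with span 2 and ordered legs on ℕ. -/
def SpCfg : Type := {c : ℕ × ℕ // c.2 = c.1 + 1 ∨ c.2 = c.1 + 2}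

open Classical in
/-- Spider rates: exactly one leg moves, with the rate of the underlying walk;
moves violating the constraints (encoded in `SpCfg`) are suppressed. -/
noncomputable def spRate (q : ℕ → ℕ → ℝ≥0∞) (c d : SpCfg) : ℝ≥0∞ :=
  (if c.1.2 = d.1.2 ∧ c.1.1 ≠ d.1.1 then q c.1.1 d.1.1 else 0) +
  (if c.1.1 = d.1.1 ∧ c.1.2 ≠ d.1.2 then q c.1.2 d.1.2 else 0)

/-- Jump chain of a continuous-time chain with rates `q`. -/
noncomputable def jumpChain {S : Type*} (q : S → S → ℝ≥0∞) : S → S → ℝ≥0∞ :=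
  fun x y => q x y / ∑' z, q x z

/-- The identification (x, x+i) ↔ 2x+i-1 of spider configurations with ℕ. -/
def enc (c : SpCfg) : ℕ := 2 * c.1.1 + (c.1.2 - c.1.1) - 1

open Classical in
/-- The configuration encoded by n ∈ ℕ. -/
def cfgOf (n : ℕ) : SpCfg :=
  if n % 2 = 0 then ⟨(n / 2, n / 2 + 1), Or.inl rfl⟩ else ⟨(n / 2, n / 2 + 2), Or.inr rfl⟩

/-- Mean drift of the (encoded) jump chain of the spider. -/
noncomputable def spDrift (q : ℕ → ℕ → ℝ≥0∞) (c : SpCfg) : ℝ :=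
  ∑' d : SpCfg, (jumpChain (spRate q) c d).toReal * ((enc d : ℝ) - (enc c : ℝ))

open Classical in
/-- n-step transition probabilities. -/
noncomputable def iterK {S : Type*} (p : S → S → ℝ≥0∞) : ℕ → S → S → ℝ≥0∞
  | 0 => fun x y => if x = y then (1 : ℝ≥0∞) else 0
  | (n+1) => fun x y => ∑' z, iterK p n x z * p z y


/-! ### Auxiliary development -/

section PureLemmas
open scoped ENNReal

noncomputable def grr (y : ℝ) : ℝ := y⁻¹ + (y+1)⁻¹ + (y+2)⁻¹

noncomputable def gE (n : ℕ) : ℝ≥0∞ :=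
  ((n:ℝ≥0∞))⁻¹ + ((n:ℝ≥0∞)+1)⁻¹ + ((n:ℝ≥0∞)+2)⁻¹

noncomputable def ndiv (a b : ℕ) : ℝ≥0∞ := (a : ℝ≥0∞) / (b : ℝ≥0∞)

lemma harmE (y : ℝ) (hy : 0 ≤ y) :
    ((2*y+5)/(4*y+8)) * grr (2*y+3) + ((2*y+1)/(4*y+4)) * grr (2*y+1)
      = ((2*y+5)/(4*y+8) + (2*y+1)/(4*y+4)) * grr (2*y+2) := by
  unfold grr
  have h1 : (2*y+1) ≠ 0 := by positivity
  have h2 : (2*y+2) ≠ 0 := by positivity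
  have h3 : (2*y+3) ≠ 0 := by positivity
  have h4 : (2*y+4) ≠ 0 := by positivity
  have h5 : (2*y+5) ≠ 0 := by positivity
  have h6 : (4*y+8) ≠ 0 := by positivity
  have h7 : (4*y+4) ≠ 0 := by positivity
  have e3 : (2*y+3+1) = 2*y+4 := by ring
  have e4 : (2*y+3+2) = 2*y+5 := by ring
  have e1 : (2*y+1+1) = 2*y+2 := by ring
  have e2 : (2*y+1+2) = 2*y+3 := by ring
  have e5 : (2*y+2+1) = 2*y+3 := by ring
  have e6 : (2*y+2+2) = 2*y+4 := by ring
  rw [e3, e4, e1, e2, e5, e6]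
  field_simp
  ring

lemma harmO (y : ℝ) (hy : 0 ≤ y) :
    ((2*y+3)/(4*y+4)) * grr (2*y+4) + ((2*y+5)/(4*y+12)) * grr (2*y+2)
      = ((2*y+3)/(4*y+4) + (2*y+5)/(4*y+12)) * grr (2*y+3) := by
  unfold grr
  have h2 : (2*y+2) ≠ 0 := by positivity
  have h3 : (2*y+3) ≠ 0 := by positivity
  have h4 : (2*y+4) ≠ 0 := by positivity
  have h5 : (2*y+5) ≠ 0 := by positivity
  have h6 : (2*y+6) ≠ 0 := by positivity
  have h7 : (4*y+4) ≠ 0 := by positivity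
  have h8 : (4*y+12) ≠ 0 := by positivity
  have e1 : (2*y+4+1) = 2*y+5 := by ring
  have e2 : (2*y+4+2) = 2*y+6 := by ring
  have e3 : (2*y+2+1) = 2*y+3 := by ring
  have e4 : (2*y+2+2) = 2*y+4 := by ring
  have e5 : (2*y+3+1) = 2*y+4 := by ring
  have e6 : (2*y+3+2) = 2*y+5 := by ring
  rw [e1, e2, e3, e4, e5, e6]
  field_simp
  ring

lemma cast_add_one_ne_zero (n : ℕ) : ((n:ℝ≥0∞)+1) ≠ 0 :=
  ne_of_gt (lt_of_lt_of_le zero_lt_one le_add_self)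

lemma cast_add_two_ne_zero (n : ℕ) : ((n:ℝ≥0∞)+2) ≠ 0 :=
  ne_of_gt (lt_of_lt_of_le two_pos le_add_self)

lemma gE_ne_zero (n : ℕ) : gE n ≠ 0 := by
  unfold gE
  intro h
  rw [add_eq_zero, add_eq_zero] at h
  exact (ENNReal.inv_ne_zero.mpr
    (ENNReal.add_ne_top.mpr ⟨ENNReal.natCast_ne_top n, ENNReal.ofNat_ne_top⟩)) h.2

lemma gE_ne_top {n : ℕ} (hn : n ≠ 0) : gE n ≠ ⊤ := by
  unfold gE
  refine ENNReal.add_ne_top.mpr ⟨ENNReal.add_ne_top.mpr ⟨?_, ?_⟩, ?_⟩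
  · rw [ENNReal.inv_ne_top]; exact_mod_cast hn
  · rw [ENNReal.inv_ne_top]; exact cast_add_one_ne_zero n
  · rw [ENNReal.inv_ne_top]; exact cast_add_two_ne_zero n

lemma gE_toReal {n : ℕ} (hn : n ≠ 0) : (gE n).toReal = grr n := by
  unfold gE grr
  have e1 : ((n:ℝ≥0∞)+1).toReal = (n:ℝ)+1 := by
    rw [ENNReal.toReal_add (ENNReal.natCast_ne_top n) ENNReal.one_ne_top]; simp
  have e2 : ((n:ℝ≥0∞)+2).toReal = (n:ℝ)+2 := by
    rw [ENNReal.toReal_add (ENNReal.natCast_ne_top n) ENNReal.ofNat_ne_top]; simp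
  rw [ENNReal.toReal_add, ENNReal.toReal_add, ENNReal.toReal_inv, ENNReal.toReal_inv,
    ENNReal.toReal_inv]
  · rw [e1, e2]; simp
  · rw [ENNReal.inv_ne_top]; exact_mod_cast hn
  · rw [ENNReal.inv_ne_top]; exact cast_add_one_ne_zero n
  · refine ENNReal.add_ne_top.mpr ⟨?_, ?_⟩ <;> rw [ENNReal.inv_ne_top]
    · exact_mod_cast hn
    · exact cast_add_one_ne_zero n
  · rw [ENNReal.inv_ne_top]; exact cast_add_two_ne_zero n

lemma gE_anti {a b : ℕ} (hab : a ≤ b) : gE b ≤ gE a := by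
  unfold gE
  have : (a:ℝ≥0∞) ≤ (b:ℝ≥0∞) := by exact_mod_cast hab
  gcongr

lemma ndiv_ne_top {a b : ℕ} (hb : b ≠ 0) : ndiv a b ≠ ⊤ := by
  unfold ndiv
  intro h
  rw [ENNReal.div_eq_top] at h
  rcases h with ⟨-, h⟩ | ⟨h, -⟩
  · exact hb (by exact_mod_cast h)
  · exact (ENNReal.natCast_ne_top a) h

lemma ndiv_ne_zero {a b : ℕ} (ha : a ≠ 0) : ndiv a b ≠ 0 := by
  unfold ndiv
  simp only [ne_eq, ENNReal.div_eq_zero_iff, not_or]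
  exact ⟨by exact_mod_cast ha, ENNReal.natCast_ne_top b⟩

lemma ndiv_toReal (a b : ℕ) : (ndiv a b).toReal = (a:ℝ)/(b:ℝ) := by
  unfold ndiv
  rw [ENNReal.toReal_div]
  simp

lemma key_div_le' {U D A B C ε : ℝ≥0∞} (hU : U ≠ ⊤) (hD : D ≠ ⊤) (hA : A ≠ ⊤) (hB : B ≠ ⊤)
    (hC : C ≠ ⊤) (hT : U + D ≠ 0) (hε : ε ≠ ⊤)
    (h : U.toReal * A.toReal + D.toReal * B.toReal + (U.toReal + D.toReal) * ε.toReal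
      ≤ (U.toReal + D.toReal) * C.toReal) :
    (U*A + D*B) / (U+D) + ε ≤ C := by
  have hTt : U + D ≠ ⊤ := ENNReal.add_ne_top.mpr ⟨hU, hD⟩
  have hX : U*A + D*B ≠ ⊤ :=
    ENNReal.add_ne_top.mpr ⟨ENNReal.mul_ne_top hU hA, ENNReal.mul_ne_top hD hB⟩
  have hdiv : (U*A + D*B) / (U+D) ≠ ⊤ := (ENNReal.div_lt_top hX hT).ne
  rw [← ENNReal.toReal_le_toReal (ENNReal.add_ne_top.mpr ⟨hdiv, hε⟩) hC]
  rw [ENNReal.toReal_add hdiv hε, ENNReal.toReal_div,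
    ENNReal.toReal_add (ENNReal.mul_ne_top hU hA) (ENNReal.mul_ne_top hD hB),
    ENNReal.toReal_mul, ENNReal.toReal_mul]
  have ht : 0 < (U+D).toReal := ENNReal.toReal_pos hT hTt
  rw [ENNReal.toReal_add hU hD] at ht ⊢
  rw [div_add' _ _ _ ht.ne', div_le_iff₀ ht]
  linarith

lemma key_div_le {U D A B C : ℝ≥0∞} (hU : U ≠ ⊤) (hD : D ≠ ⊤) (hA : A ≠ ⊤) (hB : B ≠ ⊤)
    (hC : C ≠ ⊤) (hT : U + D ≠ 0)
    (h : U.toReal * A.toReal + D.toReal * B.toReal ≤ (U.toReal + D.toReal) * C.toReal) :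
    (U*A + D*B) / (U+D) ≤ C := by
  have := key_div_le' hU hD hA hB hC hT (ENNReal.zero_ne_top) (by simpa using h)
  simpa using this

lemma harm_div_E (x : ℕ) :
    (ndiv (2*x+5) (4*x+8) * gE (2*x+3) + ndiv (2*x+1) (4*x+4) * gE (2*x+1)) /
      (ndiv (2*x+5) (4*x+8) + ndiv (2*x+1) (4*x+4)) ≤ gE (2*x+2) := by
  have hT : ndiv (2*x+5) (4*x+8) + ndiv (2*x+1) (4*x+4) ≠ 0 := fun h =>
    ndiv_ne_zero (a := 2*x+5) (b := 4*x+8) (by omega) (add_eq_zero.mp h).1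
  apply key_div_le (ndiv_ne_top (by omega)) (ndiv_ne_top (by omega)) (gE_ne_top (by omega))
    (gE_ne_top (by omega)) (gE_ne_top (by omega)) hT
  rw [ndiv_toReal, ndiv_toReal, gE_toReal (by omega), gE_toReal (by omega),
    gE_toReal (by omega)]
  push_cast
  exact le_of_eq (harmE (x:ℝ) (Nat.cast_nonneg x))

lemma harm_div_O (x : ℕ) :
    (ndiv (2*x+3) (4*x+4) * gE (2*x+4) + ndiv (2*x+5) (4*x+12) * gE (2*x+2)) /
      (ndiv (2*x+3) (4*x+4) + ndiv (2*x+5) (4*x+12)) ≤ gE (2*x+3) := by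
  have hT : ndiv (2*x+3) (4*x+4) + ndiv (2*x+5) (4*x+12) ≠ 0 := fun h =>
    ndiv_ne_zero (a := 2*x+3) (b := 4*x+4) (by omega) (add_eq_zero.mp h).1
  apply key_div_le (ndiv_ne_top (by omega)) (ndiv_ne_top (by omega)) (gE_ne_top (by omega))
    (gE_ne_top (by omega)) (gE_ne_top (by omega)) hT
  rw [ndiv_toReal, ndiv_toReal, gE_toReal (by omega), gE_toReal (by omega),
    gE_toReal (by omega)]
  push_cast
  exact le_of_eq (harmO (x:ℝ) (Nat.cast_nonneg x))

lemma jump_tsum {S : Type*} (r : S → S → ℝ≥0∞) (z : S) (h : S → ℝ≥0∞) :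
    ∑' y, jumpChain r z y * h y = (∑' y, r z y * h y) / (∑' y, r z y) := by
  simp only [jumpChain, div_eq_mul_inv]
  rw [← ENNReal.tsum_mul_right]
  congr 1; ext y; ring

open Classical in
lemma green_finite {S : Type*} (p : S → S → ℝ≥0∞) (c : S) (h : S → ℝ≥0∞) (ε : ℝ≥0∞)
    (hε0 : ε ≠ 0) (hc : h c ≠ ⊤)
    (H1 : ∀ z, z ≠ c → (∑' y, p z y * h y) ≤ h z)
    (H2 : (∑' y, p c y * h y) + ε ≤ h c) :
    ∑' n : ℕ, iterK p n c c ≠ ⊤ := by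
  have H : ∀ z, (∑' y, p z y * h y) + (if z = c then ε else 0) ≤ h z := by
    intro z
    by_cases hz : z = c
    · subst hz; rw [if_pos rfl]; exact H2
    · rw [if_neg hz, add_zero]; exact H1 z hz
  set a : ℕ → ℝ≥0∞ := fun n => ∑' z, iterK p n c z * h z with ha
  have ha0 : a 0 = h c := by
    simp only [ha, iterK]
    rw [tsum_eq_single c (by intro z hz; simp [if_neg (Ne.symm hz)])]
    simp
  have step : ∀ n, a (n+1) + ε * iterK p n c c ≤ a n := by
    intro n
    have e1 : a (n+1) = ∑' z, iterK p n c z * (∑' y, p z y * h y) := by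
      simp only [ha, iterK]
      calc ∑' z, (∑' y, iterK p n c y * p y z) * h z
          = ∑' z, ∑' y, iterK p n c y * p y z * h z := by
            congr 1; ext z; exact ENNReal.tsum_mul_right.symm
        _ = ∑' y, ∑' z, iterK p n c y * p y z * h z := ENNReal.tsum_comm
        _ = ∑' y, iterK p n c y * ∑' z, p y z * h z := by
            congr 1; ext y; rw [← ENNReal.tsum_mul_left]; congr 1; ext z; ring
    have e2 : ε * iterK p n c c = ∑' z, iterK p n c z * (if z = c then ε else 0) := by
      rw [tsum_eq_single c (by intro z hz; simp [if_neg hz])]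
      simp [mul_comm]
    calc a (n+1) + ε * iterK p n c c
        = ∑' z, (iterK p n c z * (∑' y, p z y * h y)
            + iterK p n c z * (if z = c then ε else 0)) := by
          rw [ENNReal.tsum_add, ← e1, ← e2]
      _ = ∑' z, iterK p n c z * ((∑' y, p z y * h y) + (if z = c then ε else 0)) := by
          congr 1; ext z; rw [mul_add]
      _ ≤ ∑' z, iterK p n c z * h z := ENNReal.tsum_le_tsum (fun z => mul_le_mul_right (H z) _)
      _ = a n := rfl
  have key : ∀ N, ε * (∑ k ∈ Finset.range N, iterK p k c c) + a N ≤ h c := by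
    intro N
    induction N with
    | zero => simp [ha0]
    | succ N ih =>
      rw [Finset.sum_range_succ, mul_add]
      calc ε * ∑ k ∈ Finset.range N, iterK p k c c + ε * iterK p N c c + a (N+1)
          = ε * ∑ k ∈ Finset.range N, iterK p k c c + (a (N+1) + ε * iterK p N c c) := by
            ring
        _ ≤ ε * ∑ k ∈ Finset.range N, iterK p k c c + a N := add_le_add_right (step N) _
        _ ≤ h c := ih
  have bnd : ∀ N, (∑ k ∈ Finset.range N, iterK p k c c) ≤ h c / ε := by
    intro N
    rw [ENNReal.le_div_iff_mul_le (Or.inl hε0) (Or.inr hc)]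
    calc (∑ k ∈ Finset.range N, iterK p k c c) * ε
        = ε * ∑ k ∈ Finset.range N, iterK p k c c := mul_comm _ _
      _ ≤ h c := le_trans (le_add_right le_rfl) (key N)
  have : ∑' n : ℕ, iterK p n c c ≤ h c / ε := by
    rw [ENNReal.tsum_eq_iSup_sum]
    refine iSup_le fun s => ?_
    refine le_trans (Finset.sum_le_sum_of_subset fun x hx => ?_) (bnd (s.sup id + 1))
    exact Finset.mem_range.mpr (Nat.lt_succ_of_le (Finset.le_sup (f := id) hx))
  exact ne_top_of_le_ne_top (ENNReal.div_lt_top hc hε0).ne this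

end PureLemmas

section Cfg

instance : DecidableEq SpCfg := fun a b => decidable_of_iff (a.1 = b.1) Subtype.ext_iff.symm

def Ecfg (x : ℕ) : SpCfg := ⟨(x, x+1), Or.inl rfl⟩
def Ocfg (x : ℕ) : SpCfg := ⟨(x, x+2), Or.inr rfl⟩

lemma enc_E (x : ℕ) : enc (Ecfg x) = 2*x := by
  show 2*x + (x+1-x) - 1 = 2*x; omega

lemma enc_O (x : ℕ) : enc (Ocfg x) = 2*x+1 := by
  show 2*x + (x+2-x) - 1 = 2*x+1; omega

lemma casesSp (c : SpCfg) : (∃ x, c = Ecfg x) ∨ (∃ x, c = Ocfg x) := by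
  obtain ⟨⟨a,b⟩, hb | hb⟩ := c
  · exact Or.inl ⟨a, Subtype.ext (by simpa [Ecfg] using hb)⟩
  · exact Or.inr ⟨a, Subtype.ext (by simpa [Ocfg] using hb)⟩

lemma E_ne_O (x y : ℕ) : Ecfg x ≠ Ocfg y := by
  intro h
  have := congrArg (fun c : SpCfg => c.1) h
  simp [Ecfg, Ocfg, Prod.ext_iff] at this
  omega

lemma E_inj {x y : ℕ} (h : Ecfg x = Ecfg y) : x = y := by
  have := congrArg (fun c : SpCfg => c.1.1) h; simpa [Ecfg] using this

lemma O_inj {x y : ℕ} (h : Ocfg x = Ocfg y) : x = y := by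
  have := congrArg (fun c : SpCfg => c.1.1) h; simpa [Ocfg] using this

end Cfg

section Chain
variable (q : ℕ → ℕ → ℝ≥0∞)
    (hup : ∀ x : ℕ, 1 ≤ x → q x (x + 1) = ((2 * x + 1 : ℕ) : ℝ≥0∞) / ((4 * x : ℕ) : ℝ≥0∞))
    (hdown : ∀ x : ℕ, 1 ≤ x → q x (x - 1) = ((2 * x - 1 : ℕ) : ℝ≥0∞) / ((4 * x : ℕ) : ℝ≥0∞))
    (h0 : 0 < q 0 1)
    (hnn : ∀ x y : ℕ, y ≠ x + 1 → x ≠ y + 1 → q x y = 0)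

include hnn in
lemma qkey {u v : ℕ} (h : q u v ≠ 0) : v = u + 1 ∨ u = v + 1 := by
  by_contra hc; push_neg at hc; exact h (hnn u v hc.1 hc.2)

lemma spRate_E_up (x : ℕ) : spRate q (Ecfg x) (Ocfg x) = q (x+1) (x+2) := by
  simp [spRate, Ecfg, Ocfg]

lemma spRate_E_dn (y : ℕ) : spRate q (Ecfg (y+1)) (Ocfg y) = q (y+1) y := by
  simp [spRate, Ecfg, Ocfg]

lemma spRate_O_up (x : ℕ) : spRate q (Ocfg x) (Ecfg (x+1)) = q x (x+1) := by
  simp [spRate, Ecfg, Ocfg]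

lemma spRate_O_dn (x : ℕ) : spRate q (Ocfg x) (Ecfg x) = q (x+2) (x+1) := by
  simp [spRate, Ecfg, Ocfg]

include hnn in
lemma supp_E0 {d : SpCfg} (h : spRate q (Ecfg 0) d ≠ 0) : d = Ocfg 0 := by
  obtain ⟨⟨a,b⟩, hb⟩ := d
  dsimp only [spRate, Ecfg] at h
  split_ifs at h with h1 h2 h2
  · exact absurd h1.1 h2.2
  · rw [add_zero] at h
    have h' := qkey q hnn h
    exact Subtype.ext (by simp only [Ocfg, Prod.mk.injEq]; simp only at hb h1; omega)
  · rw [zero_add] at h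
    have h' := qkey q hnn h
    exact Subtype.ext (by simp only [Ocfg, Prod.mk.injEq]; simp only at hb h2; omega)
  · simp at h

include hnn in
lemma supp_E {d : SpCfg} (y : ℕ) (h : spRate q (Ecfg (y+1)) d ≠ 0) :
    d = Ocfg (y+1) ∨ d = Ocfg y := by
  obtain ⟨⟨a,b⟩, hb⟩ := d
  dsimp only [spRate, Ecfg] at h
  split_ifs at h with h1 h2 h2
  · exact absurd h1.1 h2.2
  · rw [add_zero] at h
    have h' := qkey q hnn h
    exact Or.inr (Subtype.ext (by simp only [Ocfg, Prod.mk.injEq]; simp only at hb h1; omega))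
  · rw [zero_add] at h
    have h' := qkey q hnn h
    exact Or.inl (Subtype.ext (by simp only [Ocfg, Prod.mk.injEq]; simp only at hb h2; omega))
  · simp at h

include hnn in
lemma supp_O {d : SpCfg} (x : ℕ) (h : spRate q (Ocfg x) d ≠ 0) :
    d = Ecfg (x+1) ∨ d = Ecfg x := by
  obtain ⟨⟨a,b⟩, hb⟩ := d
  dsimp only [spRate, Ocfg] at h
  split_ifs at h with h1 h2 h2
  · exact absurd h1.1 h2.2
  · rw [add_zero] at h
    have h' := qkey q hnn h
    exact Or.inl (Subtype.ext (by simp only [Ecfg, Prod.mk.injEq]; simp only at hb h1; omega))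
  · rw [zero_add] at h
    have h' := qkey q hnn h
    exact Or.inr (Subtype.ext (by simp only [Ecfg, Prod.mk.injEq]; simp only at hb h2; omega))
  · simp at h

include hnn in
lemma spRate_E_to_E0 (w : ℕ) : spRate q (Ecfg (w+1)) (Ecfg 0) = 0 := by
  by_contra h
  rcases supp_E q hnn w h with h' | h' <;> exact E_ne_O _ _ h'

include hnn in
lemma spRate_O_to_E0 (w : ℕ) : spRate q (Ocfg (w+1)) (Ecfg 0) = 0 := by
  by_contra h
  rcases supp_O q hnn (w+1) h with h' | h' <;> (have := E_inj h'; omega)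

include hnn in
lemma spRate_E0_self : spRate q (Ecfg 0) (Ecfg 0) = 0 := by
  by_contra h
  exact E_ne_O _ _ (supp_E0 q hnn h)

include hnn in
lemma row_E0 (f : SpCfg → ℝ≥0∞) :
    ∑' d, spRate q (Ecfg 0) d * f d = q 1 2 * f (Ocfg 0) := by
  rw [tsum_eq_sum (s := {Ocfg 0}) ?_]
  · rw [Finset.sum_singleton, spRate_E_up]
  · intro d hd
    by_cases h : spRate q (Ecfg 0) d = 0
    · rw [h, zero_mul]
    · exact absurd (supp_E0 q hnn h) (by simpa using hd)

include hnn in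
lemma row_E (y : ℕ) (f : SpCfg → ℝ≥0∞) :
    ∑' d, spRate q (Ecfg (y+1)) d * f d
      = q (y+2) (y+3) * f (Ocfg (y+1)) + q (y+1) y * f (Ocfg y) := by
  have hne : Ocfg (y+1) ≠ Ocfg y := fun h => by have := O_inj h; omega
  rw [tsum_eq_sum (s := {Ocfg (y+1), Ocfg y}) ?_]
  · rw [Finset.sum_pair hne, spRate_E_up, spRate_E_dn]
  · intro d hd
    by_cases h : spRate q (Ecfg (y+1)) d = 0
    · rw [h, zero_mul]
    · rcases supp_E q hnn y h with rfl | rfl <;> simp at hd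

include hnn in
lemma row_O (x : ℕ) (f : SpCfg → ℝ≥0∞) :
    ∑' d, spRate q (Ocfg x) d * f d
      = q x (x+1) * f (Ecfg (x+1)) + q (x+2) (x+1) * f (Ecfg x) := by
  have hne : Ecfg (x+1) ≠ Ecfg x := fun h => by have := E_inj h; omega
  rw [tsum_eq_sum (s := {Ecfg (x+1), Ecfg x}) ?_]
  · rw [Finset.sum_pair hne, spRate_O_up, spRate_O_dn]
  · intro d hd
    by_cases h : spRate q (Ocfg x) d = 0
    · rw [h, zero_mul]
    · rcases supp_O q hnn x h with rfl | rfl <;> simp at hd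

include hnn in
lemma T_E0 : ∑' d, spRate q (Ecfg 0) d = q 1 2 := by
  simpa using row_E0 q hnn (fun _ => 1)

include hnn in
lemma T_E (y : ℕ) : ∑' d, spRate q (Ecfg (y+1)) d = q (y+2) (y+3) + q (y+1) y := by
  simpa using row_E q hnn y (fun _ => 1)

include hnn in
lemma T_O (x : ℕ) : ∑' d, spRate q (Ocfg x) d = q x (x+1) + q (x+2) (x+1) := by
  simpa using row_O q hnn x (fun _ => 1)

include hup in
lemma qv12 : q 1 2 = ndiv 3 4 := by
  have h := hup 1 le_rfl
  norm_num at h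
  exact h

include hdown in
lemma qv21 : q 2 1 = ndiv 3 8 := by
  have h := hdown 2 (by omega)
  norm_num at h
  exact h

include hup in
lemma qvEup (x : ℕ) : q (x+2) (x+3) = ndiv (2*x+5) (4*x+8) := by
  have h := hup (x+2) (by omega)
  have e1 : 2*(x+2)+1 = 2*x+5 := by omega
  have e2 : 4*(x+2) = 4*x+8 := by omega
  rw [e1, e2] at h
  exact h

include hdown in
lemma qvEdn (x : ℕ) : q (x+1) x = ndiv (2*x+1) (4*x+4) := by
  have h := hdown (x+1) (by omega)
  have e1 : 2*(x+1)-1 = 2*x+1 := by omega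
  have e2 : 4*(x+1) = 4*x+4 := by omega
  rw [e1, e2] at h
  exact h

include hup in
lemma qvOup (x : ℕ) : q (x+1) (x+2) = ndiv (2*x+3) (4*x+4) := by
  have h := hup (x+1) (by omega)
  have e1 : 2*(x+1)+1 = 2*x+3 := by omega
  have e2 : 4*(x+1) = 4*x+4 := by omega
  rw [e1, e2] at h
  exact h

include hdown in
lemma qvOdn (x : ℕ) : q (x+3) (x+2) = ndiv (2*x+5) (4*x+12) := by
  have h := hdown (x+3) (by omega)
  have e1 : 2*(x+3)-1 = 2*x+5 := by omega
  have e2 : 4*(x+3) = 4*x+12 := by omega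
  rw [e1, e2] at h
  exact h

include hup hdown hnn in
lemma HzE_int (w m : ℕ) (hne : 2*w+2 ≠ m) :
    (∑' y, jumpChain (spRate q) (Ecfg (w+1)) y * gE (max (enc y) m))
      ≤ gE (max (enc (Ecfg (w+1))) m) := by
  rw [jump_tsum, row_E q hnn w, T_E q hnn w, qvEup q hup w, qvEdn q hdown w]
  simp only [enc_E, enc_O]
  rcases lt_or_gt_of_ne hne with hlt | hgt
  · rw [max_eq_right (by omega), max_eq_right (by omega), max_eq_right (by omega)]
    have e : ndiv (2*w+5) (4*w+8) * gE m + ndiv (2*w+1) (4*w+4) * gE m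
        = gE m * (ndiv (2*w+5) (4*w+8) + ndiv (2*w+1) (4*w+4)) := by ring
    rw [e]
    exact ENNReal.div_le_of_le_mul le_rfl
  · rw [max_eq_left (by omega), max_eq_left (by omega), max_eq_left (by omega)]
    have e1 : 2*(w+1)+1 = 2*w+3 := by omega
    have e2 : 2*(w+1) = 2*w+2 := by omega
    rw [e1, e2]
    exact harm_div_E w

include hup hdown hnn in
lemma HzO_int (w m : ℕ) (hne : 2*w+3 ≠ m) :
    (∑' y, jumpChain (spRate q) (Ocfg (w+1)) y * gE (max (enc y) m))
      ≤ gE (max (enc (Ocfg (w+1))) m) := by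
  rw [jump_tsum, row_O q hnn (w+1), qvOup q hup w, qvOdn q hdown w, T_O q hnn (w+1),
    qvOup q hup w, qvOdn q hdown w]
  simp only [enc_E, enc_O]
  rcases lt_or_gt_of_ne hne with hlt | hgt
  · rw [max_eq_right (by omega), max_eq_right (by omega), max_eq_right (by omega)]
    have e : ndiv (2*w+3) (4*w+4) * gE m + ndiv (2*w+5) (4*w+12) * gE m
        = gE m * (ndiv (2*w+3) (4*w+4) + ndiv (2*w+5) (4*w+12)) := by ring
    rw [e]
    exact ENNReal.div_le_of_le_mul le_rfl
  · rw [max_eq_left (by omega), max_eq_left (by omega), max_eq_left (by omega)]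
    have e1 : 2*(w+2) = 2*w+4 := by omega
    have e2 : 2*(w+1) = 2*w+2 := by omega
    have e3 : 2*(w+1)+1 = 2*w+3 := by omega
    rw [e1, e3, e2]
    exact harm_div_O w

include hup hdown hnn in
lemma HzE0_int (m : ℕ) (hm : 1 ≤ m) :
    (∑' y, jumpChain (spRate q) (Ecfg 0) y * gE (max (enc y) m))
      ≤ gE (max (enc (Ecfg 0)) m) := by
  rw [jump_tsum, row_E0 q hnn, T_E0 q hnn]
  simp only [enc_E, enc_O]
  rw [max_eq_right (by omega), max_eq_right (by omega)]
  exact ENNReal.div_le_of_le_mul (le_of_eq (mul_comm _ _))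

include hup hdown hnn in
lemma HzO0_int (m : ℕ) (hm : 2 ≤ m) :
    (∑' y, jumpChain (spRate q) (Ocfg 0) y * gE (max (enc y) m))
      ≤ gE (max (enc (Ocfg 0)) m) := by
  rw [jump_tsum, row_O q hnn 0, T_O q hnn 0]
  simp only [enc_E, enc_O]
  rw [max_eq_right (by omega), max_eq_right (by omega), max_eq_right (by omega)]
  have e : q 0 1 * gE m + q 2 1 * gE m = gE m * (q 0 1 + q 2 1) := by ring
  rw [e]
  exact ENNReal.div_le_of_le_mul le_rfl

include hup hdown hnn in
lemma trans_CE (x : ℕ) :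
    ∑' n : ℕ, iterK (jumpChain (spRate q)) n (Ecfg (x+1)) (Ecfg (x+1)) ≠ ⊤ := by
  apply green_finite (jumpChain (spRate q)) (Ecfg (x+1)) (fun d => gE (max (enc d) (2*x+2)))
    (ENNReal.ofReal (3/((8*(x:ℝ)+8)*(2*(x:ℝ)+4))))
  · rw [Ne, ENNReal.ofReal_eq_zero]
    push_neg
    positivity
  · show gE (max (enc (Ecfg (x+1))) (2*x+2)) ≠ ⊤
    exact gE_ne_top (by rw [enc_E]; omega)
  · intro z hz
    show (∑' y, jumpChain (spRate q) z y * gE (max (enc y) (2*x+2)))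
      ≤ gE (max (enc z) (2*x+2))
    rcases casesSp z with ⟨w, rfl⟩ | ⟨w, rfl⟩
    · cases w with
      | zero => exact HzE0_int q hup hdown hnn (2*x+2) (by omega)
      | succ w =>
        refine HzE_int q hup hdown hnn w (2*x+2) (fun h => hz ?_)
        have : w = x := by omega
        rw [this]
    · cases w with
      | zero => exact HzO0_int q hup hdown hnn (2*x+2) (by omega)
      | succ w => exact HzO_int q hup hdown hnn w (2*x+2) (by omega)
  · show (∑' y, jumpChain (spRate q) (Ecfg (x+1)) y * gE (max (enc y) (2*x+2))) + _
      ≤ gE (max (enc (Ecfg (x+1))) (2*x+2))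
    rw [jump_tsum, row_E q hnn x, T_E q hnn x, qvEup q hup x, qvEdn q hdown x]
    simp only [enc_E, enc_O]
    have e1 : 2*(x+1)+1 = 2*x+3 := by omega
    have e2 : 2*(x+1) = 2*x+2 := by omega
    rw [e1, e2, max_eq_left (by omega), max_eq_right (by omega), max_self]
    have hT : ndiv (2*x+5) (4*x+8) + ndiv (2*x+1) (4*x+4) ≠ 0 := fun h =>
      ndiv_ne_zero (a := 2*x+5) (b := 4*x+8) (by omega) (add_eq_zero.mp h).1
    apply key_div_le' (ndiv_ne_top (by omega)) (ndiv_ne_top (by omega)) (gE_ne_top (by omega))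
      (gE_ne_top (by omega)) (gE_ne_top (by omega)) hT ENNReal.ofReal_ne_top
    rw [ndiv_toReal, ndiv_toReal, gE_toReal (show 2*x+3 ≠ 0 by omega),
      gE_toReal (show 2*x+2 ≠ 0 by omega), ENNReal.toReal_ofReal (by positivity)]
    push_cast
    have hx0 : (0:ℝ) ≤ (x:ℝ) := Nat.cast_nonneg x
    have h1 := harmE (x:ℝ) hx0
    have p1 : (2*(x:ℝ)+1) ≠ 0 := by positivity
    have p2 : (2*(x:ℝ)+2) ≠ 0 := by positivity
    have p3 : (2*(x:ℝ)+3) ≠ 0 := by positivity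
    have p4 : (2*(x:ℝ)+4) ≠ 0 := by positivity
    have p5 : (4*(x:ℝ)+4) ≠ 0 := by positivity
    have p6 : (4*(x:ℝ)+8) ≠ 0 := by positivity
    have p7 : (8*(x:ℝ)+8) ≠ 0 := by positivity
    have h2 : grr (2*(x:ℝ)+1) - grr (2*(x:ℝ)+2) = 3/((2*(x:ℝ)+1)*(2*(x:ℝ)+4)) := by
      unfold grr
      field_simp
      ring
    have hK : ((2*(x:ℝ)+1)/(4*(x:ℝ)+4)) * (grr (2*(x:ℝ)+1) - grr (2*(x:ℝ)+2))
        = 3/((4*(x:ℝ)+4)*(2*(x:ℝ)+4)) := by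
      rw [h2]
      field_simp
    have hK' : ((2*(x:ℝ)+1)/(4*(x:ℝ)+4)) * grr (2*(x:ℝ)+1)
        - ((2*(x:ℝ)+1)/(4*(x:ℝ)+4)) * grr (2*(x:ℝ)+2) = 3/((4*(x:ℝ)+4)*(2*(x:ℝ)+4)) := by
      linear_combination hK
    have hu : (2*(x:ℝ)+5)/(4*(x:ℝ)+8) ≤ 1 := by
      rw [div_le_one (by positivity)]; linarith
    have hd : (2*(x:ℝ)+1)/(4*(x:ℝ)+4) ≤ 1 := by
      rw [div_le_one (by positivity)]; linarith
    have h2e : (2:ℝ) * (3/((8*(x:ℝ)+8)*(2*(x:ℝ)+4))) = 3/((4*(x:ℝ)+4)*(2*(x:ℝ)+4)) := by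
      field_simp
      ring
    have her : ((2*(x:ℝ)+5)/(4*(x:ℝ)+8) + (2*(x:ℝ)+1)/(4*(x:ℝ)+4))
          * (3/((8*(x:ℝ)+8)*(2*(x:ℝ)+4)))
        ≤ 2 * (3/((8*(x:ℝ)+8)*(2*(x:ℝ)+4))) :=
      mul_le_mul_of_nonneg_right (by linarith) (by positivity)
    linarith [h1, hK', her, h2e]

include hup hdown hnn in
lemma trans_CO (x : ℕ) :
    ∑' n : ℕ, iterK (jumpChain (spRate q)) n (Ocfg (x+1)) (Ocfg (x+1)) ≠ ⊤ := by
  apply green_finite (jumpChain (spRate q)) (Ocfg (x+1)) (fun d => gE (max (enc d) (2*x+3)))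
    (ENNReal.ofReal (3/((8*(x:ℝ)+24)*(2*(x:ℝ)+2))))
  · rw [Ne, ENNReal.ofReal_eq_zero]
    push_neg
    positivity
  · show gE (max (enc (Ocfg (x+1))) (2*x+3)) ≠ ⊤
    exact gE_ne_top (by rw [enc_O]; omega)
  · intro z hz
    show (∑' y, jumpChain (spRate q) z y * gE (max (enc y) (2*x+3)))
      ≤ gE (max (enc z) (2*x+3))
    rcases casesSp z with ⟨w, rfl⟩ | ⟨w, rfl⟩
    · cases w with
      | zero => exact HzE0_int q hup hdown hnn (2*x+3) (by omega)
      | succ w => exact HzE_int q hup hdown hnn w (2*x+3) (by omega)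
    · cases w with
      | zero => exact HzO0_int q hup hdown hnn (2*x+3) (by omega)
      | succ w =>
        refine HzO_int q hup hdown hnn w (2*x+3) (fun h => hz ?_)
        have : w = x := by omega
        rw [this]
  · show (∑' y, jumpChain (spRate q) (Ocfg (x+1)) y * gE (max (enc y) (2*x+3))) + _
      ≤ gE (max (enc (Ocfg (x+1))) (2*x+3))
    rw [jump_tsum, row_O q hnn (x+1), T_O q hnn (x+1), qvOup q hup x, qvOdn q hdown x]
    simp only [enc_E, enc_O]
    have e1 : 2*(x+2) = 2*x+4 := by omega
    have e3 : 2*(x+1)+1 = 2*x+3 := by omega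
    have e2 : 2*(x+1) = 2*x+2 := by omega
    rw [e1, e3, e2, max_eq_left (by omega), max_eq_right (by omega), max_self]
    have hT : ndiv (2*x+3) (4*x+4) + ndiv (2*x+5) (4*x+12) ≠ 0 := fun h =>
      ndiv_ne_zero (a := 2*x+3) (b := 4*x+4) (by omega) (add_eq_zero.mp h).1
    apply key_div_le' (ndiv_ne_top (by omega)) (ndiv_ne_top (by omega)) (gE_ne_top (by omega))
      (gE_ne_top (by omega)) (gE_ne_top (by omega)) hT ENNReal.ofReal_ne_top
    rw [ndiv_toReal, ndiv_toReal, gE_toReal (show 2*x+4 ≠ 0 by omega),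
      gE_toReal (show 2*x+3 ≠ 0 by omega), ENNReal.toReal_ofReal (by positivity)]
    push_cast
    have hx0 : (0:ℝ) ≤ (x:ℝ) := Nat.cast_nonneg x
    have h1 := harmO (x:ℝ) hx0
    have p1 : (2*(x:ℝ)+2) ≠ 0 := by positivity
    have p2 : (2*(x:ℝ)+3) ≠ 0 := by positivity
    have p3 : (2*(x:ℝ)+4) ≠ 0 := by positivity
    have p4 : (2*(x:ℝ)+5) ≠ 0 := by positivity
    have p5 : (4*(x:ℝ)+4) ≠ 0 := by positivity
    have p6 : (4*(x:ℝ)+12) ≠ 0 := by positivity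
    have p7 : (8*(x:ℝ)+24) ≠ 0 := by positivity
    have h2 : grr (2*(x:ℝ)+2) - grr (2*(x:ℝ)+3) = 3/((2*(x:ℝ)+2)*(2*(x:ℝ)+5)) := by
      unfold grr
      field_simp
      ring
    have hK : ((2*(x:ℝ)+5)/(4*(x:ℝ)+12)) * (grr (2*(x:ℝ)+2) - grr (2*(x:ℝ)+3))
        = 3/((4*(x:ℝ)+12)*(2*(x:ℝ)+2)) := by
      rw [h2]
      field_simp
    have hK' : ((2*(x:ℝ)+5)/(4*(x:ℝ)+12)) * grr (2*(x:ℝ)+2)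
        - ((2*(x:ℝ)+5)/(4*(x:ℝ)+12)) * grr (2*(x:ℝ)+3)
        = 3/((4*(x:ℝ)+12)*(2*(x:ℝ)+2)) := by
      linear_combination hK
    have hu : (2*(x:ℝ)+3)/(4*(x:ℝ)+4) ≤ 1 := by
      rw [div_le_one (by positivity)]; linarith
    have hd : (2*(x:ℝ)+5)/(4*(x:ℝ)+12) ≤ 1 := by
      rw [div_le_one (by positivity)]; linarith
    have h2e : (2:ℝ) * (3/((8*(x:ℝ)+24)*(2*(x:ℝ)+2))) = 3/((4*(x:ℝ)+12)*(2*(x:ℝ)+2)) := by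
      field_simp
      ring
    have her : ((2*(x:ℝ)+3)/(4*(x:ℝ)+4) + (2*(x:ℝ)+5)/(4*(x:ℝ)+12))
          * (3/((8*(x:ℝ)+24)*(2*(x:ℝ)+2)))
        ≤ 2 * (3/((8*(x:ℝ)+24)*(2*(x:ℝ)+2))) :=
      mul_le_mul_of_nonneg_right (by linarith) (by positivity)
    linarith [h1, hK', her, h2e]

include hup hdown hnn in
lemma HB1 : ∀ z, z ≠ Ocfg 0 →
    (∑' y, jumpChain (spRate q) z y * gE (max (enc y) 1)) ≤ gE (max (enc z) 1) := by
  intro z hz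
  rcases casesSp z with ⟨w, rfl⟩ | ⟨w, rfl⟩
  · cases w with
    | zero => exact HzE0_int q hup hdown hnn 1 le_rfl
    | succ w => exact HzE_int q hup hdown hnn w 1 (by omega)
  · cases w with
    | zero => exact absurd rfl hz
    | succ w => exact HzO_int q hup hdown hnn w 1 (by omega)

include hup hdown h0 hnn in
lemma trans_B :
    ∑' n : ℕ, iterK (jumpChain (spRate q)) n (Ocfg 0) (Ocfg 0) ≠ ⊤ := by
  by_cases hα : q 0 1 = ⊤
  · apply green_finite (jumpChain (spRate q)) (Ocfg 0) (fun d => gE (max (enc d) 1)) (gE 2)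
      (gE_ne_zero 2)
    · show gE (max (enc (Ocfg 0)) 1) ≠ ⊤
      exact gE_ne_top (by rw [enc_O]; omega)
    · exact HB1 q hup hdown hnn
    · show (∑' y, jumpChain (spRate q) (Ocfg 0) y * gE (max (enc y) 1)) + _
        ≤ gE (max (enc (Ocfg 0)) 1)
      rw [jump_tsum, row_O q hnn 0, T_O q hnn 0, hα, top_add, ENNReal.div_top, zero_add]
      simp only [enc_O]
      rw [show 2*0+1 = 1 from rfl, max_self]
      exact gE_anti (by omega)
  · have ha' : 0 < (q 0 1).toReal := ENNReal.toReal_pos h0.ne' hα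
    apply green_finite (jumpChain (spRate q)) (Ocfg 0) (fun d => gE (max (enc d) 1))
      (ENNReal.ofReal ((q 0 1).toReal * (3/4) / ((q 0 1).toReal + 3/8)))
    · rw [Ne, ENNReal.ofReal_eq_zero]
      push_neg
      exact div_pos (mul_pos ha' (by norm_num)) (by linarith)
    · show gE (max (enc (Ocfg 0)) 1) ≠ ⊤
      exact gE_ne_top (by rw [enc_O]; omega)
    · exact HB1 q hup hdown hnn
    · show (∑' y, jumpChain (spRate q) (Ocfg 0) y * gE (max (enc y) 1)) + _
        ≤ gE (max (enc (Ocfg 0)) 1)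
      rw [jump_tsum, row_O q hnn 0, T_O q hnn 0, qv21 q hdown]
      simp only [enc_E, enc_O]
      rw [show 2*1 = 2 from rfl, show 2*0 = 0 from rfl, show 2*0+1 = 1 from rfl,
        max_eq_left (by omega), max_eq_right (by omega), max_self]
      have hT : q 0 1 + ndiv 3 8 ≠ 0 := fun h =>
        ndiv_ne_zero (a := 3) (b := 8) (by omega) (add_eq_zero.mp h).2
      apply key_div_le' hα (ndiv_ne_top (by omega)) (gE_ne_top (by omega))
        (gE_ne_top (by omega)) (gE_ne_top (by omega)) hT ENNReal.ofReal_ne_top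
      rw [ndiv_toReal, gE_toReal (by omega), gE_toReal (by omega),
        ENNReal.toReal_ofReal (by positivity)]
      push_cast
      have hg1 : grr 1 = 11/6 := by norm_num [grr]
      have hg2 : grr 2 = 13/12 := by norm_num [grr]
      have hcancel : ((q 0 1).toReal + 3/8) * ((q 0 1).toReal * (3/4) / ((q 0 1).toReal + 3/8))
          = (q 0 1).toReal * (3/4) := by
        field_simp
      rw [hg1, hg2, hcancel]
      linarith

include hup hdown h0 hnn in
lemma trans_A :
    ∑' n : ℕ, iterK (jumpChain (spRate q)) n (Ecfg 0) (Ecfg 0) ≠ ⊤ := by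
  apply green_finite (jumpChain (spRate q)) (Ecfg 0)
    (fun d => gE (max (enc d) 1) + (if d = Ecfg 0 then min (q 0 1) 1 else 0))
    (min (q 0 1) 1) (lt_min h0 zero_lt_one).ne'
  · show gE (max (enc (Ecfg 0)) 1) + (if Ecfg 0 = Ecfg 0 then min (q 0 1) 1 else 0) ≠ ⊤
    rw [if_pos rfl]
    exact ENNReal.add_ne_top.mpr ⟨gE_ne_top (by omega),
      ne_top_of_le_ne_top ENNReal.one_ne_top (min_le_right _ _)⟩
  · intro z hz
    show (∑' y, jumpChain (spRate q) z y
        * (gE (max (enc y) 1) + (if y = Ecfg 0 then min (q 0 1) 1 else 0)))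
      ≤ gE (max (enc z) 1) + (if z = Ecfg 0 then min (q 0 1) 1 else 0)
    rw [if_neg hz]
    rcases casesSp z with ⟨w, rfl⟩ | ⟨w, rfl⟩
    · cases w with
      | zero => exact absurd rfl hz
      | succ w =>
        have strip : (∑' y, jumpChain (spRate q) (Ecfg (w+1)) y
            * (gE (max (enc y) 1) + (if y = Ecfg 0 then min (q 0 1) 1 else 0)))
            = ∑' y, jumpChain (spRate q) (Ecfg (w+1)) y * gE (max (enc y) 1) := by
          refine tsum_congr fun y => ?_
          by_cases hy : y = Ecfg 0
          · subst hy
            have hz0 : jumpChain (spRate q) (Ecfg (w+1)) (Ecfg 0) = 0 := by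
              unfold jumpChain
              rw [spRate_E_to_E0 q hnn w, ENNReal.zero_div]
            rw [hz0, zero_mul, zero_mul]
          · rw [if_neg hy, add_zero]
        rw [strip, add_zero]
        exact HzE_int q hup hdown hnn w 1 (by omega)
    · cases w with
      | zero =>
        rw [add_zero, jump_tsum, row_O q hnn 0, T_O q hnn 0, qv21 q hdown]
        rw [if_neg (show Ecfg (0+1) ≠ Ecfg 0 from fun h => by have := E_inj h; omega),
          add_zero, if_pos rfl, enc_E, enc_E, enc_O,
          show max (2*(0+1)) 1 = 2 from by omega, show max (2*0) 1 = 1 from by omega,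
          show max (2*0+1) 1 = 1 from by omega, show (0:ℕ)+1 = 1 from by omega]
        by_cases hα : q 0 1 = ⊤
        · apply ENNReal.div_le_of_le_mul
          rw [hα, top_add, ENNReal.mul_top (gE_ne_zero 1)]
          exact le_top
        · have hT : q 0 1 + ndiv 3 8 ≠ 0 := fun h =>
            ndiv_ne_zero (a := 3) (b := 8) (by omega) (add_eq_zero.mp h).2
          have hβt : min (q 0 1) 1 ≠ ⊤ :=
            ne_top_of_le_ne_top ENNReal.one_ne_top (min_le_right _ _)
          apply key_div_le hα (ndiv_ne_top (by omega)) (gE_ne_top (by omega))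
            (ENNReal.add_ne_top.mpr ⟨gE_ne_top (by omega), hβt⟩) (gE_ne_top (by omega)) hT
          rw [ndiv_toReal, gE_toReal (by omega),
            ENNReal.toReal_add (gE_ne_top (by omega)) hβt, gE_toReal (by omega)]
          push_cast
          have hg1 : grr 1 = 11/6 := by norm_num [grr]
          have hg2 : grr 2 = 13/12 := by norm_num [grr]
          have hb : (min (q 0 1) 1).toReal ≤ (q 0 1).toReal :=
            ENNReal.toReal_mono hα (min_le_left _ _)
          have hb0 : 0 ≤ (min (q 0 1) 1).toReal := ENNReal.toReal_nonneg
          have ha0 : 0 ≤ (q 0 1).toReal := ENNReal.toReal_nonneg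
          rw [hg1, hg2]
          linarith
      | succ w =>
        have strip : (∑' y, jumpChain (spRate q) (Ocfg (w+1)) y
            * (gE (max (enc y) 1) + (if y = Ecfg 0 then min (q 0 1) 1 else 0)))
            = ∑' y, jumpChain (spRate q) (Ocfg (w+1)) y * gE (max (enc y) 1) := by
          refine tsum_congr fun y => ?_
          by_cases hy : y = Ecfg 0
          · subst hy
            have hz0 : jumpChain (spRate q) (Ocfg (w+1)) (Ecfg 0) = 0 := by
              unfold jumpChain
              rw [spRate_O_to_E0 q hnn w, ENNReal.zero_div]
            rw [hz0, zero_mul, zero_mul]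
          · rw [if_neg hy, add_zero]
        rw [strip, add_zero]
        exact HzO_int q hup hdown hnn w 1 (by omega)
  · show (∑' y, jumpChain (spRate q) (Ecfg 0) y
        * (gE (max (enc y) 1) + (if y = Ecfg 0 then min (q 0 1) 1 else 0))) + _
      ≤ gE (max (enc (Ecfg 0)) 1) + (if Ecfg 0 = Ecfg 0 then min (q 0 1) 1 else 0)
    rw [jump_tsum, row_E0 q hnn, T_E0 q hnn,
      if_neg (Ne.symm (E_ne_O 0 0)), add_zero, if_pos rfl, enc_E, enc_O,
      show max (2*0+1) 1 = 1 from by omega, show max (2*0) 1 = 1 from by omega]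
    exact add_le_add_left (ENNReal.div_le_of_le_mul (le_of_eq (mul_comm _ _))) _

lemma spRate_E_up' (y : ℕ) : spRate q (Ecfg (y+1)) (Ocfg (y+1)) = q (y+2) (y+3) :=
  spRate_E_up q (y+1)

lemma spRate_O_up' (y : ℕ) : spRate q (Ocfg (y+1)) (Ecfg (y+2)) = q (y+1) (y+2) :=
  spRate_O_up q (y+1)

lemma spRate_O_dn' (y : ℕ) : spRate q (Ocfg (y+1)) (Ecfg (y+1)) = q (y+3) (y+2) :=
  spRate_O_dn q (y+1)

include hup hdown hnn in
lemma driftE (x : ℕ) (hx : 1 ≤ x) :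
    spDrift q (Ecfg x) = (2*(x:ℝ)+1)/(4*(x:ℝ)*((x:ℝ)+1)-1) := by
  obtain ⟨y, rfl⟩ : ∃ y, x = y + 1 := ⟨x-1, by omega⟩
  unfold spDrift
  have hne : Ocfg (y+1) ≠ Ocfg y := fun h => by have := O_inj h; omega
  rw [tsum_eq_sum (s := {Ocfg (y+1), Ocfg y}) ?_]
  · rw [Finset.sum_pair hne]
    have hjup : jumpChain (spRate q) (Ecfg (y+1)) (Ocfg (y+1))
        = ndiv (2*y+5) (4*y+8) / (ndiv (2*y+5) (4*y+8) + ndiv (2*y+1) (4*y+4)) := by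
      unfold jumpChain
      rw [T_E q hnn y, spRate_E_up' q y, qvEup q hup y, qvEdn q hdown y]
    have hjdn : jumpChain (spRate q) (Ecfg (y+1)) (Ocfg y)
        = ndiv (2*y+1) (4*y+4) / (ndiv (2*y+5) (4*y+8) + ndiv (2*y+1) (4*y+4)) := by
      unfold jumpChain
      rw [T_E q hnn y, spRate_E_dn, qvEup q hup y, qvEdn q hdown y]
    rw [hjup, hjdn, enc_O, enc_O, enc_E,
      ENNReal.toReal_div, ENNReal.toReal_div,
      ENNReal.toReal_add (ndiv_ne_top (by omega)) (ndiv_ne_top (by omega)),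
      ndiv_toReal, ndiv_toReal]
    push_cast
    have hy : (0:ℝ) ≤ (y:ℝ) := Nat.cast_nonneg y
    have d1 : (4*(y:ℝ)+8) ≠ 0 := by positivity
    have d2 : (4*(y:ℝ)+4) ≠ 0 := by positivity
    have d3 : (0:ℝ) < (2*(y:ℝ)+5)/(4*(y:ℝ)+8) + (2*(y:ℝ)+1)/(4*(y:ℝ)+4) := by positivity
    have d4 : 4*((y:ℝ)+1)*((y:ℝ)+1+1)-1 ≠ 0 := by nlinarith
    field_simp
    ring
  · intro d hd
    by_cases h : spRate q (Ecfg (y+1)) d = 0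
    · have hj : jumpChain (spRate q) (Ecfg (y+1)) d = 0 := by
        unfold jumpChain
        rw [h, ENNReal.zero_div]
      rw [hj]
      simp
    · rcases supp_E q hnn y h with rfl | rfl <;> simp at hd

include hup hdown hnn in
lemma driftO (x : ℕ) (hx : 1 ≤ x) :
    spDrift q (Ocfg x) = ((x:ℝ)+1)/(2*(x:ℝ)*((x:ℝ)+2)+1) := by
  obtain ⟨y, rfl⟩ : ∃ y, x = y + 1 := ⟨x-1, by omega⟩
  unfold spDrift
  have hne : Ecfg (y+2) ≠ Ecfg (y+1) := fun h => by have := E_inj h; omega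
  rw [tsum_eq_sum (s := {Ecfg (y+2), Ecfg (y+1)}) ?_]
  · rw [Finset.sum_pair hne]
    have hjup : jumpChain (spRate q) (Ocfg (y+1)) (Ecfg (y+2))
        = ndiv (2*y+3) (4*y+4) / (ndiv (2*y+3) (4*y+4) + ndiv (2*y+5) (4*y+12)) := by
      unfold jumpChain
      rw [T_O q hnn (y+1), spRate_O_up' q y, qvOup q hup y, qvOdn q hdown y]
    have hjdn : jumpChain (spRate q) (Ocfg (y+1)) (Ecfg (y+1))
        = ndiv (2*y+5) (4*y+12) / (ndiv (2*y+3) (4*y+4) + ndiv (2*y+5) (4*y+12)) := by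
      unfold jumpChain
      rw [T_O q hnn (y+1), spRate_O_dn' q y, qvOup q hup y, qvOdn q hdown y]
    rw [hjup, hjdn, enc_E, enc_E, enc_O,
      ENNReal.toReal_div, ENNReal.toReal_div,
      ENNReal.toReal_add (ndiv_ne_top (by omega)) (ndiv_ne_top (by omega)),
      ndiv_toReal, ndiv_toReal]
    push_cast
    have hy : (0:ℝ) ≤ (y:ℝ) := Nat.cast_nonneg y
    have d1 : (4*(y:ℝ)+4) ≠ 0 := by positivity
    have d2 : (4*(y:ℝ)+12) ≠ 0 := by positivity
    have d3 : (0:ℝ) < (2*(y:ℝ)+3)/(4*(y:ℝ)+4) + (2*(y:ℝ)+5)/(4*(y:ℝ)+12) := by positivity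
    have d4 : 2*((y:ℝ)+1)*((y:ℝ)+1+2)+1 ≠ 0 := by nlinarith
    field_simp
    ring
  · intro d hd
    by_cases h : spRate q (Ocfg (y+1)) d = 0
    · have hj : jumpChain (spRate q) (Ocfg (y+1)) d = 0 := by
        unfold jumpChain
        rw [h, ENNReal.zero_div]
      rw [hj]
      simp
    · rcases supp_O q hnn (y+1) h with rfl | rfl
      · exact absurd (Finset.mem_insert_self (Ecfg (y+2)) {Ecfg (y+1)}) hd
      · exact absurd (Finset.mem_insert_of_mem (Finset.mem_singleton_self (Ecfg (y+1)))) hd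

end Chain

lemma limit_aux :
    Filter.Tendsto (fun n : ℕ => ((n:ℝ)*((n:ℝ)+1))/((n:ℝ)^2+2*(n:ℝ)-1))
      Filter.atTop (nhds 1) := by
  have h0 : Filter.Tendsto (fun n : ℕ => ((n:ℝ))⁻¹) Filter.atTop (nhds 0) :=
    tendsto_inv_atTop_nhds_zero_nat
  have hnum : Filter.Tendsto (fun n : ℕ => 1 + ((n:ℝ))⁻¹) Filter.atTop (nhds 1) := by
    simpa using tendsto_const_nhds.add h0
  have hden : Filter.Tendsto (fun n : ℕ => 1 + 2*((n:ℝ))⁻¹ - ((n:ℝ))⁻¹*((n:ℝ))⁻¹)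
      Filter.atTop (nhds 1) := by
    have h2 : Filter.Tendsto (fun n : ℕ => 2*((n:ℝ))⁻¹) Filter.atTop (nhds 0) := by
      simpa using tendsto_const_nhds.mul h0
    have := (tendsto_const_nhds (x := (1:ℝ)).add h2).sub (h0.mul h0)
    simpa using this
  have hlim := hnum.div hden one_ne_zero
  rw [show (1:ℝ)/1 = 1 by norm_num] at hlim
  refine Filter.Tendsto.congr' ?_ hlim
  filter_upwards [Filter.eventually_ge_atTop 1] with n hn
  have hn' : (1:ℝ) ≤ (n:ℝ) := by exact_mod_cast hn
  have h1 : (n:ℝ) ≠ 0 := ne_of_gt (lt_of_lt_of_le zero_lt_one hn')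
  have h2 : (n:ℝ)^2+2*(n:ℝ)-1 ≠ 0 := by nlinarith
  simp only [Pi.div_apply]
  have e : 1 + 2*((n:ℝ))⁻¹ - ((n:ℝ))⁻¹*((n:ℝ))⁻¹ = ((n:ℝ)^2+2*(n:ℝ)-1)/((n:ℝ)^2) := by
    field_simp
  rw [e, div_div_eq_mul_div]
  have e2 : (1+((n:ℝ))⁻¹)*((n:ℝ)^2) = (n:ℝ)*((n:ℝ)+1) := by
    field_simp
  rw [e2]


theorem spider_on_lamperti_transient
    (q : ℕ → ℕ → ℝ≥0∞)
    (hup : ∀ x : ℕ, 1 ≤ x → q x (x + 1) = ((2 * x + 1 : ℕ) : ℝ≥0∞) / ((4 * x : ℕ) : ℝ≥0∞))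
    (hdown : ∀ x : ℕ, 1 ≤ x → q x (x - 1) = ((2 * x - 1 : ℕ) : ℝ≥0∞) / ((4 * x : ℕ) : ℝ≥0∞))
    (h0 : 0 < q 0 1)
    (hnn : ∀ x y : ℕ, y ≠ x + 1 → x ≠ y + 1 → q x y = 0) :
    -- the jump chain of the spider is a nearest-neighbour chain in the encoding
    (∀ c d : SpCfg, spRate q c d ≠ 0 → enc d = enc c + 1 ∨ enc d + 1 = enc c) ∧
    -- drift formulas: μ^s(2x) at (x,x+1) and μ^s(2x+1) at (x,x+2)
    (∀ x : ℕ, 1 ≤ x →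
      spDrift q ⟨(x, x + 1), Or.inl rfl⟩
        = (2 * (x : ℝ) + 1) / (4 * x * (x + 1) - 1) ∧
      spDrift q ⟨(x, x + 2), Or.inr rfl⟩
        = ((x : ℝ) + 1) / (2 * x * (x + 2) + 1)) ∧
    -- μ^s(n) ∼ 1/n as n → ∞
    Filter.Tendsto (fun n : ℕ => (n : ℝ) * spDrift q (cfgOf n)) Filter.atTop (nhds 1) ∧
    -- the spider walk is transient: the Green function of its jump chain is finite
    (∀ c : SpCfg, ∑' n : ℕ, iterK (jumpChain (spRate q)) n c c ≠ ∞) := by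
  refine ⟨?_, ?_, ?_, ?_⟩
  · -- nearest-neighbour structure
    intro c d hcd
    rcases casesSp c with ⟨x, rfl⟩ | ⟨x, rfl⟩
    · cases x with
      | zero =>
        obtain rfl := supp_E0 q hnn hcd
        left
        simp only [enc_O, enc_E]
      | succ x =>
        rcases supp_E q hnn x hcd with rfl | rfl
        · left; simp only [enc_O, enc_E]
        · right; simp only [enc_O, enc_E]
          omega
    · rcases supp_O q hnn x hcd with rfl | rfl
      · left
        simp only [enc_E, enc_O]
        try omega
      · right
        simp only [enc_E, enc_O]
        try omega
  · -- drift formulas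
    intro x hx
    exact ⟨driftE q hup hdown hnn x hx, driftO q hup hdown hnn x hx⟩
  · -- μ^s(n) ~ 1/n
    have heq : (fun n : ℕ => ((n:ℝ)*((n:ℝ)+1))/((n:ℝ)^2+2*(n:ℝ)-1)) =ᶠ[Filter.atTop]
        (fun n : ℕ => (n : ℝ) * spDrift q (cfgOf n)) := by
      filter_upwards [Filter.eventually_ge_atTop 2] with n hn
      rcases Nat.even_or_odd n with he | ho
      · have hmod : n % 2 = 0 := Nat.even_iff.mp he
        have hcfg : cfgOf n = Ecfg (n/2) := by
          unfold cfgOf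
          exact if_pos hmod
        rw [hcfg, driftE q hup hdown hnn (n/2) (by omega)]
        have hnn2 : n = 2*(n/2) := by omega
        have h2 : (n:ℝ) = 2*((n/2 : ℕ):ℝ) := by
          conv_lhs => rw [hnn2]
          push_cast
          ring
        have hc1 : (1:ℝ) ≤ ((n/2 : ℕ):ℝ) := by exact_mod_cast (by omega : 1 ≤ n/2)
        set c : ℝ := ((n/2 : ℕ):ℝ) with hc
        rw [h2]
        have d1 : 4*c*(c+1)-1 ≠ 0 := by nlinarith
        have d2 : (2*c)^2+2*(2*c)-1 ≠ 0 := by nlinarith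
        field_simp
        ring
      · have hmod : n % 2 = 1 := Nat.odd_iff.mp ho
        have hcfg : cfgOf n = Ocfg (n/2) := by
          unfold cfgOf
          exact if_neg (by omega)
        rw [hcfg, driftO q hup hdown hnn (n/2) (by omega)]
        have hnn2 : n = 2*(n/2)+1 := by omega
        have h2 : (n:ℝ) = 2*((n/2 : ℕ):ℝ)+1 := by
          conv_lhs => rw [hnn2]
          push_cast
          ring
        have hc1 : (1:ℝ) ≤ ((n/2 : ℕ):ℝ) := by exact_mod_cast (by omega : 1 ≤ n/2)
        set c : ℝ := ((n/2 : ℕ):ℝ) with hc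
        rw [h2]
        have d1 : 2*c*(c+2)+1 ≠ 0 := by nlinarith
        have d2 : (2*c+1)^2+2*(2*c+1)-1 ≠ 0 := by nlinarith
        have d3 : (2*c+1)*(2*c+1+2)-1 ≠ 0 := by nlinarith
        field_simp
        ring
    exact Filter.Tendsto.congr' heq limit_aux
  · -- transience
    intro c
    rcases casesSp c with ⟨x, rfl⟩ | ⟨x, rfl⟩
    · cases x with
      | zero => exact trans_A q hup hdown h0 hnn
      | succ x => exact trans_CE q hup hdown hnn x
    · cases x with
      | zero => exact trans_B q hup hdown h0 hnn
      | succ x => exact trans_CO q hup hdown hnn x
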